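/- For every positive integer r, the linear span of the functions x ↦ (n·r)^x, n ∈ ℕ⁺, is dense in C([0,1]) with the uniform norm. -/

import Mathlib

namespace Stmt11Aux

noncomputable def f (r n : ℕ+) : C(Set.Icc (0:ℝ) 1, ℝ) :=
  ContinuousMap.mk (fun x : Set.Icc (0:ℝ) 1 =>
    Real.exp ((x : ℝ) * Real.log ((n : ℝ) * (r : ℝ)))) (by fun_prop)

lemma f_apply (r n : ℕ+) (x : Set.Icc (0:ℝ) 1) :
    f r n x = Real.exp ((x : ℝ) * Real.log ((n : ℝ) * (r : ℝ))) := rfl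

lemma nr_pos (r n : ℕ+) : (0:ℝ) < (n : ℝ) * (r : ℝ) := by
  have h1 : (0:ℝ) < (n:ℝ) := by exact_mod_cast n.pos
  have h2 : (0:ℝ) < (r:ℝ) := by exact_mod_cast r.pos
  positivity

lemma f_mul (r n m : ℕ+) : f r n * f r m = f r (n * m * r) := by
  ext x
  simp only [ContinuousMap.mul_apply, f_apply]
  rw [← Real.exp_add, ← mul_add, ← Real.log_mul (nr_pos r n).ne' (nr_pos r m).ne']
  congr 3
  push_cast
  ring

noncomputable def M (r : ℕ+) : Submodule ℝ C(Set.Icc (0:ℝ) 1, ℝ) :=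
  Submodule.span ℝ (Set.range (f r))

lemma mul_mem_M (r : ℕ+) {a b : C(Set.Icc (0:ℝ) 1, ℝ)} (ha : a ∈ M r) (hb : b ∈ M r) :
    a * b ∈ M r := by
  induction ha using Submodule.span_induction with
  | mem a ha =>
    induction hb using Submodule.span_induction with
    | mem b hb =>
      obtain ⟨n, rfl⟩ := ha
      obtain ⟨m, rfl⟩ := hb
      rw [f_mul]
      exact Submodule.subset_span ⟨n * m * r, rfl⟩
    | zero => simpa using (M r).zero_mem
    | add x y hx hy hx' hy' => simpa [mul_add] using (M r).add_mem hx' hy'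
    | smul c x hx hx' => simpa [mul_smul_comm] using (M r).smul_mem c hx'
  | zero => simpa using (M r).zero_mem
  | add x y hx hy hx' hy' => simpa [add_mul] using (M r).add_mem hx' hy'
  | smul c x hx hx' => simpa [smul_mul_assoc] using (M r).smul_mem c hx'

lemma mul_mem_closure_M (r : ℕ+) {a b : C(Set.Icc (0:ℝ) 1, ℝ)}
    (ha : a ∈ closure (M r : Set C(Set.Icc (0:ℝ) 1, ℝ)))
    (hb : b ∈ closure (M r : Set C(Set.Icc (0:ℝ) 1, ℝ))) :
    a * b ∈ closure (M r : Set C(Set.Icc (0:ℝ) 1, ℝ)) := by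
  exact map_mem_closure₂ continuous_mul ha hb (fun x hx y hy => mul_mem_M r hx hy)

/-- `1 - (1 - w)^k ∈ M` for `w ∈ M`. -/
lemma one_sub_pow_mem (r : ℕ+) {w : C(Set.Icc (0:ℝ) 1, ℝ)} (hw : w ∈ M r) (k : ℕ) :
    1 - (1 - w) ^ k ∈ M r := by
  induction k with
  | zero => simpa using (M r).zero_mem
  | succ k ih =>
    have key : 1 - (1 - w) ^ (k + 1) = (1 - (1 - w) ^ k) * (1 - w) + w := by ring
    rw [key]
    have h1 : (1 - (1 - w) ^ k) * (1 - w) = (1 - (1 - w) ^ k) - (1 - (1 - w) ^ k) * w := by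
      ring
    rw [h1]
    exact (M r).add_mem ((M r).sub_mem ih (mul_mem_M r ih hw)) hw

lemma f_one_bounds (r : ℕ+) (x : Set.Icc (0:ℝ) 1) :
    (1:ℝ) ≤ f r 1 x ∧ f r 1 x ≤ (r : ℝ) := by
  have hr1 : (1:ℝ) ≤ (r:ℝ) := by exact_mod_cast r.one_le
  have hlog : 0 ≤ Real.log ((1:ℝ) * (r:ℝ)) := by
    rw [one_mul]; exact Real.log_nonneg hr1
  have hx0 : (0:ℝ) ≤ (x:ℝ) := x.2.1
  have hx1 : (x:ℝ) ≤ 1 := x.2.2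
  have hc1 : ((1:ℕ+):ℝ) = (1:ℝ) := by norm_num
  constructor
  · rw [f_apply, hc1]
    have : 0 ≤ (x:ℝ) * Real.log ((1:ℝ) * (r:ℝ)) := mul_nonneg hx0 hlog
    exact Real.one_le_exp this
  · rw [f_apply, hc1]
    have h1 : (x:ℝ) * Real.log ((1:ℝ) * (r:ℝ)) ≤ Real.log ((1:ℝ) * (r:ℝ)) := by
      nlinarith
    calc Real.exp ((x:ℝ) * Real.log ((1:ℝ) * (r:ℝ)))
        ≤ Real.exp (Real.log ((1:ℝ) * (r:ℝ))) := Real.exp_le_exp.2 h1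
      _ = (1:ℝ) * (r:ℝ) := Real.exp_log (by positivity)
      _ = (r:ℝ) := one_mul _

lemma one_mem_closure_M (r : ℕ+) :
    (1 : C(Set.Icc (0:ℝ) 1, ℝ)) ∈ closure (M r : Set C(Set.Icc (0:ℝ) 1, ℝ)) := by
  set C : ℝ := (r : ℝ) + 1 with hC
  have hCpos : (0:ℝ) < C := by positivity
  set w : C(Set.Icc (0:ℝ) 1, ℝ) := C⁻¹ • f r 1 with hw
  have hwM : w ∈ M r := (M r).smul_mem _ (Submodule.subset_span ⟨1, rfl⟩)
  set q : ℝ := (r : ℝ) / C with hq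
  have hq0 : 0 ≤ q := by positivity
  have hq1 : q < 1 := by
    rw [hq, div_lt_one hCpos]; simp [hC]
  -- bound ‖1 - w‖ ≤ q
  have hnorm : ‖(1 : C(Set.Icc (0:ℝ) 1, ℝ)) - w‖ ≤ q := by
    rw [ContinuousMap.norm_le _ hq0]
    intro x
    have hb := f_one_bounds r x
    have h2 : q + C⁻¹ = 1 := by
      rw [hq]; field_simp; exact hC.symm
    have hx1 : ((1 : C(Set.Icc (0:ℝ) 1, ℝ)) - w) x = 1 - C⁻¹ * f r 1 x := by
      simp [hw, ContinuousMap.sub_apply, ContinuousMap.smul_apply]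
    rw [hx1, Real.norm_eq_abs, abs_le]
    constructor
    · have : C⁻¹ * f r 1 x ≤ C⁻¹ * (r:ℝ) := by
        apply mul_le_mul_of_nonneg_left hb.2 (by positivity)
      have hqeq : q = C⁻¹ * (r:ℝ) := by rw [hq]; ring
      nlinarith [inv_pos.2 hCpos]
    · have h1 : C⁻¹ * 1 ≤ C⁻¹ * f r 1 x :=
        mul_le_mul_of_nonneg_left hb.1 (by positivity)
      linarith
  -- the approximating sequence
  have htend : Filter.Tendsto (fun k : ℕ => 1 - ((1 : C(Set.Icc (0:ℝ) 1, ℝ)) - w) ^ k)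
      Filter.atTop (nhds 1) := by
    have h0 : Filter.Tendsto (fun k : ℕ => ((1 : C(Set.Icc (0:ℝ) 1, ℝ)) - w) ^ k)
        Filter.atTop (nhds 0) := by
      rw [tendsto_zero_iff_norm_tendsto_zero]
      apply squeeze_zero (fun k => norm_nonneg _) (fun k => ?_)
        (tendsto_pow_atTop_nhds_zero_of_lt_one hq0 hq1)
      calc ‖((1 : C(Set.Icc (0:ℝ) 1, ℝ)) - w) ^ k‖ ≤ ‖(1 : C(Set.Icc (0:ℝ) 1, ℝ)) - w‖ ^ k :=
            norm_pow_le _ _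
        _ ≤ q ^ k := pow_le_pow_left₀ (norm_nonneg _) hnorm k
    have := (tendsto_const_nhds (x := (1 : C(Set.Icc (0:ℝ) 1, ℝ)))).sub h0
    simpa using this
  exact mem_closure_of_tendsto htend
    (Filter.Eventually.of_forall (fun k => one_sub_pow_mem r hwM k))

end Stmt11Aux

open Stmt11Aux in
theorem stmt_11 (r : ℕ+) :
    closure ((Submodule.span ℝ (Set.range fun n : ℕ+ =>
        (ContinuousMap.mk (fun x : Set.Icc (0:ℝ) 1 =>
          Real.exp ((x : ℝ) * Real.log ((n : ℝ) * (r : ℝ)))) (by fun_prop)))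
        : Submodule ℝ C(Set.Icc (0:ℝ) 1, ℝ)) : Set C(Set.Icc (0:ℝ) 1, ℝ))
      = Set.univ := by
  have hMeq : (Submodule.span ℝ (Set.range fun n : ℕ+ =>
        (ContinuousMap.mk (fun x : Set.Icc (0:ℝ) 1 =>
          Real.exp ((x : ℝ) * Real.log ((n : ℝ) * (r : ℝ)))) (by fun_prop)))
        : Submodule ℝ C(Set.Icc (0:ℝ) 1, ℝ)) = M r := rfl
  rw [hMeq]
  -- the subalgebra generated by the f's
  set A : Subalgebra ℝ C(Set.Icc (0:ℝ) 1, ℝ) := Algebra.adjoin ℝ (Set.range (f r)) with hA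
  have hsep : A.SeparatesPoints := by
    intro x y hxy
    refine ⟨f r 2, ⟨f r 2, Algebra.subset_adjoin ⟨2, rfl⟩, rfl⟩, ?_⟩
    simp only [f_apply]
    intro h
    apply hxy
    have h2 : (1:ℝ) < (2:ℝ) * (r:ℝ) := by
      have : (1:ℝ) ≤ (r:ℝ) := by exact_mod_cast r.one_le
      push_cast
      nlinarith
    have hlog : Real.log ((2:ℝ) * (r:ℝ)) ≠ 0 :=
      ne_of_gt (Real.log_pos h2)
    exact Subtype.ext (mul_right_cancel₀ hlog (Real.exp_injective h))
  have hAtop : A.topologicalClosure = ⊤ :=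
    ContinuousMap.subalgebra_topologicalClosure_eq_top_of_separatesPoints A hsep
  -- A ⊆ closure (M r)
  have hAsub : (A : Set C(Set.Icc (0:ℝ) 1, ℝ)) ⊆ closure (M r : Set C(Set.Icc (0:ℝ) 1, ℝ)) := by
    intro a ha
    induction ha using Algebra.adjoin_induction with
    | mem x hx => exact subset_closure (Submodule.subset_span hx)
    | algebraMap c =>
      have h1 := one_mem_closure_M r
      have : (algebraMap ℝ C(Set.Icc (0:ℝ) 1, ℝ)) c = c • 1 := by
        simp [Algebra.algebraMap_eq_smul_one]
      rw [this]
      have : closure (M r : Set C(Set.Icc (0:ℝ) 1, ℝ))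
          = ((M r).topologicalClosure : Set C(Set.Icc (0:ℝ) 1, ℝ)) := rfl
      rw [this] at h1 ⊢
      exact (M r).topologicalClosure.smul_mem c h1
    | add x y hx hy hx' hy' =>
      exact (M r).topologicalClosure.add_mem hx' hy'
    | mul x y hx hy hx' hy' => exact mul_mem_closure_M r hx' hy'
  -- conclude
  apply Set.eq_univ_of_univ_subset
  have h1 : (Set.univ : Set C(Set.Icc (0:ℝ) 1, ℝ))
      = (A.topologicalClosure : Set C(Set.Icc (0:ℝ) 1, ℝ)) := by
    rw [hAtop]; rfl
  rw [h1]
  have h2 : (A.topologicalClosure : Set C(Set.Icc (0:ℝ) 1, ℝ))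
      = closure (A : Set C(Set.Icc (0:ℝ) 1, ℝ)) := rfl
  rw [h2]
  exact closure_minimal hAsub isClosed_closure
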